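/- There exists a finite group G with π(G) = {2,3,5} whose prime graph has exactly one edge, namely between 2 and 5; that is, G has an element of order 10 but no element of order 6 and no element of order 15. (For example, G = F ⋊ Fˣ with F the field of order 81.) -/

import Mathlib

open SemidirectProduct

abbrev F := GaloisField 3 4

noncomputable def addAutToMulAut : Multiplicative (AddAut F) →* MulAut (Multiplicative F) where
  toFun e := AddEquiv.toMultiplicative e.toAdd
  map_one' := by ext; rfl
  map_mul' _ _ := by ext; rfl

noncomputable def φ : Fˣ →* MulAut (Multiplicative F) :=
  addAutToMulAut.comp (DistribMulAction.toAddAut Fˣ F)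

abbrev GG := Multiplicative F ⋊[φ] Fˣ

noncomputable def eGG : GG ≃ Multiplicative F × Fˣ :=
  ⟨fun x => (x.left, x.right), fun p => ⟨p.1, p.2⟩, fun x => rfl, fun p => rfl⟩

instance : Finite GG := Finite.of_equiv _ eGG.symm

lemma cardF : Nat.card F = 81 := by rw [GaloisField.card] <;> norm_num

lemma cardU : Nat.card Fˣ = 80 := by rw [Nat.card_units, cardF]

lemma cardGG : Nat.card GG = 6480 := by
  rw [Nat.card_congr eGG, Nat.card_prod, Nat.card_congr Multiplicative.toAdd, cardF, cardU]

-- element of order 10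
lemma exists10 : ∃ g : GG, orderOf g = 10 := by
  have : IsCyclic Fˣ := inferInstance
  obtain ⟨g, hg⟩ := IsCyclic.exists_ofOrder_eq_natCard (α := Fˣ)
  refine ⟨inr (g ^ 8), ?_⟩
  rw [orderOf_injective inr inr_injective, orderOf_pow, hg, cardU]
  norm_num

-- cube of inl is 1
lemma inl_cube (a : Multiplicative F) : (inl a : GG) ^ 3 = 1 := by
  rw [← map_pow]
  have : a ^ 3 = 1 := by
    have h3 : (3 : F) = 0 := by
      have := CharP.cast_eq_zero F 3
      exact_mod_cast this
    have : (a ^ 3).toAdd = (3 : ℕ) • a.toAdd := rfl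
    have h0 : (a ^ 3).toAdd = 0 := by
      rw [this, nsmul_eq_mul, Nat.cast_ofNat, h3, zero_mul]
    exact Multiplicative.toAdd.injective h0
  rw [this, map_one]

-- from rightHom x = 1, get x = inl a
lemma mem_inl {x : GG} (h : rightHom x = 1) : ∃ a, x = inl a := by
  have : x ∈ (inl : Multiplicative F →* GG).range := by
    rw [range_inl_eq_ker_rightHom]; exact h
  obtain ⟨a, ha⟩ := this
  exact ⟨a, ha.symm⟩

lemma conj_inl (x : GG) (a : Multiplicative F) :
    x * inl a * x⁻¹ = inl (φ (rightHom x) a) := by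
  ext
  · simp [mul_left, inv_left, mul_comm, mul_assoc, mul_left_comm]
  · simp [mul_right, inv_right]

lemma core (x : GG) (k : ℕ) (h1 : rightHom (x ^ k) = 1) (hord : orderOf (x ^ k) = 3) :
    rightHom x = 1 := by
  obtain ⟨a, ha⟩ := mem_inl h1
  have ha1 : a ≠ 1 := by
    rintro rfl
    rw [map_one] at ha
    rw [ha, orderOf_one] at hord
    norm_num at hord
  have hcomm : x * inl a * x⁻¹ = inl a := by
    rw [← ha]; group
  have heq : φ (rightHom x) a = a := inl_injective (by rw [← conj_inl]; exact hcomm)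
  have ht : a.toAdd ≠ 0 := fun h => ha1 (Multiplicative.toAdd.injective (by simpa using h))
  have hm : ((rightHom x : Fˣ) : F) * a.toAdd = a.toAdd := congrArg Multiplicative.toAdd heq
  have hu : ((rightHom x : Fˣ) : F) = 1 := by
    have := mul_right_cancel₀ ht (hm.trans (one_mul a.toAdd).symm)
    exact this
  exact Units.ext hu

lemma orderOf_dvd_three {x : GG} (h : rightHom x = 1) : orderOf x ∣ 3 := by
  obtain ⟨a, ha⟩ := mem_inl h
  exact orderOf_dvd_of_pow_eq_one (by rw [ha]; exact inl_cube a)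

lemma no_n (x : GG) (n k : ℕ) (hx : orderOf x = n) (hgcd : Nat.gcd n 80 ∣ k)
    (hk : n / Nat.gcd n k = 3) (hn : ¬ n ∣ 3) : False := by
  have hg : orderOf (rightHom x) ∣ Nat.gcd n 80 := by
    refine Nat.dvd_gcd ?_ ?_
    · rw [← hx]; exact orderOf_map_dvd rightHom x
    · rw [← cardU]; exact orderOf_dvd_natCard _
  have h1 : rightHom (x ^ k) = 1 := by
    rw [map_pow]
    exact orderOf_dvd_iff_pow_eq_one.mp (hg.trans hgcd)
  have hord : orderOf (x ^ k) = 3 := by rw [orderOf_pow, hx, hk]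
  have := core x k h1 hord
  exact hn (hx ▸ orderOf_dvd_three this)

lemma no6 : ¬ ∃ g : GG, orderOf g = 6 := by
  rintro ⟨x, hx⟩
  exact no_n x 6 2 hx (by norm_num) (by norm_num) (by norm_num)

lemma no15 : ¬ ∃ g : GG, orderOf g = 15 := by
  rintro ⟨x, hx⟩
  exact no_n x 15 5 hx (by norm_num) (by norm_num) (by norm_num)

lemma primeset : {p : ℕ | p.Prime ∧ p ∣ (6480 : ℕ)} = ({2, 3, 5} : Set ℕ) := by
  ext p
  simp only [Set.mem_setOf_eq, Set.mem_insert_iff, Set.mem_singleton_iff]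
  constructor
  · rintro ⟨hp, hd⟩
    have h : (6480 : ℕ) = 2 ^ 4 * 3 ^ 4 * 5 := by norm_num
    rw [h] at hd
    rcases (Nat.Prime.dvd_mul hp).mp hd with h1 | h1
    · rcases (Nat.Prime.dvd_mul hp).mp h1 with h2 | h2
      · exact Or.inl ((Nat.prime_dvd_prime_iff_eq hp Nat.prime_two).mp (hp.dvd_of_dvd_pow h2))
      · exact Or.inr (Or.inl ((Nat.prime_dvd_prime_iff_eq hp Nat.prime_three).mp
          (hp.dvd_of_dvd_pow h2)))
    · exact Or.inr (Or.inr ((Nat.prime_dvd_prime_iff_eq hp (by norm_num)).mp h1))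
  · rintro (rfl | rfl | rfl) <;> exact ⟨by norm_num, by norm_num⟩

theorem exists_group_primeGraph_edge_two_five :
    ∃ (G : Type) (_ : Group G), Finite G ∧
      {p : ℕ | p.Prime ∧ p ∣ Nat.card G} = ({2, 3, 5} : Set ℕ) ∧
      (∃ g : G, orderOf g = 10) ∧
      ¬(∃ g : G, orderOf g = 6) ∧ ¬(∃ g : G, orderOf g = 15) := by
  exact ⟨GG, inferInstance, inferInstance, by rw [cardGG]; exact primeset, exists10, no6, no15⟩
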